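/- Let P ⊆ ℝ² be a convex set containing the origin, and let a be an integer such that (2a+1, 1) ∈ P, (2a, 1) ∉ P, and (2a+2, 1) ∉ P. Then every point (c, d) ∈ P with d ≥ 1 satisfies 2a < c/d < 2a+2. -/

import Mathlib

theorem convex_locates_boundary_slope (P : Set (ℝ × ℝ)) (hP : Convex ℝ P)
    (h0 : (0, 0) ∈ P) (a : ℤ)
    (hin : ((2 * a + 1 : ℝ), 1) ∈ P)
    (hout₁ : ((2 * a : ℝ), 1) ∉ P)
    (hout₂ : ((2 * a + 2 : ℝ), 1) ∉ P) :
    ∀ c d : ℝ, (c, d) ∈ P → 1 ≤ d → (2 * a : ℝ) < c / d ∧ c / d < 2 * a + 2 := by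
  intro c d hcd hd
  have hd0 : (0:ℝ) < d := lt_of_lt_of_le one_pos hd
  -- (x, 1) ∈ P
  have hmem : ((c / d, 1) : ℝ × ℝ) ∈ P := by
    have h2 : (0:ℝ) ≤ 1/d := by positivity
    have h1 : (0:ℝ) ≤ 1 - 1/d := by
      have : 1/d ≤ 1 := by rw [div_le_one hd0]; exact hd
      linarith
    have heq : ((1/d) • ((c,d):ℝ×ℝ) + (1 - 1/d) • ((0,0):ℝ×ℝ)) = ((c / d, 1) : ℝ × ℝ) := by
      simp only [Prod.smul_mk, smul_eq_mul, Prod.mk_add_mk, Prod.mk.injEq]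
      constructor <;> field_simp <;> ring
    rw [← heq]
    exact hP hcd h0 h2 h1 (by ring)
  set x : ℝ := c / d with hx
  constructor
  · by_contra hle
    push_neg at hle
    apply hout₁
    set t : ℝ := 1 / (2*a+1 - x) with ht
    have hden : (1:ℝ) ≤ 2*a+1 - x := by linarith
    have hden0 : (0:ℝ) < 2*a+1 - x := by linarith
    have ht0 : 0 ≤ t := by positivity
    have ht1 : t ≤ 1 := by rw [ht, div_le_one hden0]; linarith
    have heq2 : t • ((x, 1) : ℝ × ℝ) + (1 - t) • (((2*a+1 : ℝ), 1) : ℝ × ℝ)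
        = (((2*a : ℝ), 1) : ℝ × ℝ) := by
      simp only [Prod.smul_mk, smul_eq_mul, Prod.mk_add_mk, Prod.mk.injEq]
      constructor
      · rw [ht]; field_simp; ring
      · ring
    rw [← heq2]
    exact hP hmem hin ht0 (by linarith) (by ring)
  · by_contra hge
    push_neg at hge
    apply hout₂
    set t : ℝ := 1 / (x - (2*a+1)) with ht
    have hden : (1:ℝ) ≤ x - (2*a+1) := by linarith
    have hden0 : (0:ℝ) < x - (2*a+1) := by linarith
    have ht0 : 0 ≤ t := by positivity
    have ht1 : t ≤ 1 := by rw [ht, div_le_one hden0]; linarith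
    have heq2 : t • ((x, 1) : ℝ × ℝ) + (1 - t) • (((2*a+1 : ℝ), 1) : ℝ × ℝ)
        = (((2*a+2 : ℝ), 1) : ℝ × ℝ) := by
      simp only [Prod.smul_mk, smul_eq_mul, Prod.mk_add_mk, Prod.mk.injEq]
      constructor
      · rw [ht]; field_simp; ring
      · ring
    rw [← heq2]
    exact hP hmem hin ht0 (by linarith) (by ring)
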